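/- (Existence of the minimiser.) Fix t > 0 and x ∈ ℝ. Let V : [0,t] × ℝ → ℝ be continuous and bounded with bounded, continuous derivative in the second variable, and let φ : ℝ → ℝ be continuously differentiable and bounded with bounded derivative. Call y : [0,t] → ℝ admissible if there exists g ∈ L²([0,t]) with y(s) = y(0) + ∫_0^s g(r) dr for all s ∈ [0,t] and y(t) = x, and for such y set A(y) = ½∫_0^t g(s)² ds + ∫_0^t V(s, y(s)) ds + φ(y(0)). Then there exists an admissible ỹ with A(ỹ) = inf { A(y) : y admissible }. -/

import Mathlib

open MeasureTheory intervalIntegral Filter Set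


private lemma lsc_exists_min {X : Type*} [TopologicalSpace X] [CompactSpace X] [Nonempty X]
    {f : X → ℝ} (hf : LowerSemicontinuous f) : ∃ z, ∀ w, f z ≤ f w := by
  by_contra h
  push_neg at h
  choose w hw using h
  obtain ⟨s, hs⟩ := isCompact_univ.elim_finite_subcover
    (fun z => f ⁻¹' Set.Ioi (f (w z))) (fun z => hf.isOpen_preimage _)
    (fun z _ => Set.mem_iUnion.2 ⟨z, hw z⟩)
  have hsne : s.Nonempty := by
    rcases Set.mem_iUnion₂.1 (hs (Set.mem_univ (Classical.arbitrary X))) with ⟨z, hz, -⟩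
    exact ⟨z, hz⟩
  obtain ⟨z₀, hz₀s, hz₀⟩ := s.exists_min_image (fun z => f (w z)) hsne
  rcases Set.mem_iUnion₂.1 (hs (Set.mem_univ (w z₀))) with ⟨z, hzs, hz⟩
  exact absurd (hz₀ z hzs) (not_le.2 hz)

private lemma lscOn_exists_min {X : Type*} [TopologicalSpace X] {K : Set X}
    (hK : IsCompact K) (hne : K.Nonempty) {f : X → ℝ}
    (hf : LowerSemicontinuousOn f K) : ∃ z ∈ K, ∀ w ∈ K, f z ≤ f w := by
  haveI := isCompact_iff_compactSpace.mp hK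
  haveI : Nonempty K := hne.to_subtype
  have hres : LowerSemicontinuous (fun z : K => f z) := by
    intro z c hc
    have h2 := hf z z.2 c hc
    rw [nhdsWithin_eq_map_subtype_coe z.2] at h2
    exact h2
  obtain ⟨z, hz⟩ := lsc_exists_min hres
  exact ⟨z, z.2, fun w hw => hz ⟨w, hw⟩⟩

private lemma lsc_dualNorm {E : Type*} [NormedAddCommGroup E] [NormedSpace ℝ E] :
    LowerSemicontinuous (fun ℓ : WeakDual ℝ E => ‖WeakDual.toStrongDual ℓ‖) := by
  intro ℓ₀ c hc
  rcases lt_or_ge c 0 with h | h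
  · exact Filter.Eventually.of_forall fun ℓ => h.trans_le (norm_nonneg _)
  · have hno : ¬ ∀ v, ‖(WeakDual.toStrongDual ℓ₀) v‖ ≤ c * ‖v‖ := fun hv =>
      absurd (ContinuousLinearMap.opNorm_le_bound _ h hv) (not_le.2 hc)
    push_neg at hno
    obtain ⟨v, hv⟩ := hno
    have hv0 : 0 < ‖v‖ := by
      rcases (norm_nonneg v).lt_or_eq with h0 | h0
      · exact h0
      · exfalso
        have : v = 0 := norm_eq_zero.1 h0.symm
        rw [this] at hv
        simp at hv
    have hopen : IsOpen {ℓ : WeakDual ℝ E | c * ‖v‖ < ‖ℓ v‖} :=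
      isOpen_lt continuous_const ((WeakDual.eval_continuous v).norm)
    have hmem : ℓ₀ ∈ {ℓ : WeakDual ℝ E | c * ‖v‖ < ‖ℓ v‖} := hv
    filter_upwards [hopen.mem_nhds hmem] with ℓ hℓ
    have h2 : ‖ℓ v‖ ≤ ‖WeakDual.toStrongDual ℓ‖ * ‖v‖ :=
      (WeakDual.toStrongDual ℓ).le_opNorm v
    have h3 : c * ‖v‖ < ‖WeakDual.toStrongDual ℓ‖ * ‖v‖ := lt_of_lt_of_le hℓ h2
    exact lt_of_mul_lt_mul_right h3 hv0.le

private lemma hilbert_exists_min {H : Type*} [NormedAddCommGroup H] [InnerProductSpace ℝ H]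
    [CompleteSpace H] (Φ : WeakDual ℝ H → ℝ) (M : ℝ)
    (hΦbdd : ∀ ℓ, |Φ ℓ| ≤ M)
    (hΦcont : ∀ R : ℝ, ContinuousOn Φ (⇑WeakDual.toStrongDual ⁻¹' Metric.closedBall 0 R)) :
    ∃ ℓmin : WeakDual ℝ H, ∀ ℓ : WeakDual ℝ H,
      (1/2) * ‖WeakDual.toStrongDual ℓmin‖^2 + Φ ℓmin ≤
        (1/2) * ‖WeakDual.toStrongDual ℓ‖^2 + Φ ℓ := by
  have hM : 0 ≤ M := le_trans (abs_nonneg _) (hΦbdd 0)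
  set F : WeakDual ℝ H → ℝ := fun ℓ => (1/2) * ‖WeakDual.toStrongDual ℓ‖^2 + Φ ℓ with hF
  set R : ℝ := Real.sqrt (2 * (2*M + 1)) with hR
  have hR0 : 0 ≤ R := Real.sqrt_nonneg _
  have hRsq : R^2 = 2*(2*M+1) := Real.sq_sqrt (by linarith)
  set K := ⇑WeakDual.toStrongDual ⁻¹' Metric.closedBall (0 : StrongDual ℝ H) R with hK
  have hKc : IsCompact K := WeakDual.isCompact_closedBall (𝕜 := ℝ) 0 R
  have h0K : (0 : WeakDual ℝ H) ∈ K := by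
    simp only [hK, Set.mem_preimage, Metric.mem_closedBall, map_zero, dist_self]
    exact hR0
  have hq : LowerSemicontinuous (fun ℓ : WeakDual ℝ H =>
      (1/2) * ‖WeakDual.toStrongDual ℓ‖^2) := by
    intro ℓ₀ c hc
    rcases lt_or_ge c 0 with h | h
    · exact Filter.Eventually.of_forall fun ℓ => h.trans_le (by positivity)
    · have h2c : 2*c < ‖WeakDual.toStrongDual ℓ₀‖^2 := by linarith
      have hb : Real.sqrt (2*c) < ‖WeakDual.toStrongDual ℓ₀‖ := by
        have := Real.sqrt_lt_sqrt (by linarith : (0:ℝ) ≤ 2*c) h2c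
        rwa [Real.sqrt_sq (norm_nonneg _)] at this
      filter_upwards [lsc_dualNorm ℓ₀ _ hb] with ℓ hℓ
      nlinarith [Real.sq_sqrt (by linarith : (0:ℝ) ≤ 2*c), Real.sqrt_nonneg (2*c),
        norm_nonneg (WeakDual.toStrongDual ℓ)]
  have hlsc : LowerSemicontinuousOn F K :=
    (hq.lowerSemicontinuousOn K).add ((hΦcont R).lowerSemicontinuousOn)
  obtain ⟨ℓm, hℓmK, hmin⟩ := lscOn_exists_min hKc ⟨0, h0K⟩ hlsc
  refine ⟨ℓm, fun ℓ => ?_⟩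
  by_cases hℓ : ℓ ∈ K
  · exact hmin ℓ hℓ
  · have h1 : R < ‖WeakDual.toStrongDual ℓ‖ := by
      by_contra hcon
      push_neg at hcon
      exact hℓ (by simpa [hK, Metric.mem_closedBall, dist_zero_right] using hcon)
    have h2 : F ℓm ≤ F 0 := hmin 0 h0K
    have hF0 : F 0 ≤ M := by
      have := (abs_le.1 (hΦbdd 0)).2
      simp only [hF, map_zero, norm_zero]
      nlinarith
    have h4 : -M ≤ Φ ℓ := (abs_le.1 (hΦbdd ℓ)).1
    have h5 : 2*(2*M+1) ≤ ‖WeakDual.toStrongDual ℓ‖^2 := by nlinarith [norm_nonneg (WeakDual.toStrongDual ℓ)]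
    have : F ℓm ≤ M := le_trans h2 hF0
    simp only [hF] at *
    nlinarith


noncomputable section

private def Act (t : ℝ) (V : ℝ → ℝ → ℝ) (φ : ℝ → ℝ) (y g : ℝ → ℝ) : ℝ :=
  (1 / 2) * (∫ s in (0:ℝ)..t, (g s) ^ 2) + (∫ s in (0:ℝ)..t, V s (y s)) + φ (y 0)

section basics

variable (t x : ℝ)

private def μT (t : ℝ) : Measure ℝ := volume.restrict (Set.Icc 0 t)

private instance (t : ℝ) : IsFiniteMeasure (μT t) := by
  constructor
  rw [μT, Measure.restrict_apply_univ]
  simp [Real.volume_Icc]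

private lemma memχ (s : ℝ) : MemLp (Set.indicator (Set.Ioc s t) (fun _ => (1:ℝ))) 2 (μT t) :=
  memLp_indicator_const 2 measurableSet_Ioc 1 (Or.inr (measure_ne_top _ _))

/-- The indicator of `(s,t]` as an element of `L²`. -/
private def χe (s : ℝ) : Lp ℝ 2 (μT t) := MemLp.toLp _ (memχ t s)

private lemma μT_restrict {s s' : ℝ} (h0 : 0 ≤ s) (h1 : s' ≤ t) :
    (μT t).restrict (Set.Ioc s s') = volume.restrict (Set.Ioc s s') := by
  rw [μT, Measure.restrict_restrict measurableSet_Ioc,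
    Set.inter_eq_self_of_subset_left (Set.Ioc_subset_Icc_self.trans (Set.Icc_subset_Icc h0 h1))]

private lemma ae_μT_of {f h : ℝ → ℝ} (hfh : f =ᵐ[μT t] h) {s s' : ℝ} (h0 : 0 ≤ s) (h1 : s' ≤ t) :
    f =ᵐ[volume.restrict (Set.Ioc s s')] h := by
  rw [← μT_restrict t h0 h1]
  exact ae_restrict_of_ae hfh

/-- interval integrals only see the a.e. class w.r.t. `μT`. -/
private lemma intervalIntegral_congr_μT {f h : ℝ → ℝ} (hfh : f =ᵐ[μT t] h)
    {s s' : ℝ} (h0 : 0 ≤ s) (hss' : s ≤ s') (h1 : s' ≤ t) :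
    ∫ r in s..s', f r = ∫ r in s..s', h r := by
  rw [intervalIntegral.integral_of_le hss', intervalIntegral.integral_of_le hss']
  exact integral_congr_ae (ae_μT_of t hfh h0 h1)

private lemma inner_χe (f : Lp ℝ 2 (μT t)) {s : ℝ} (hs : s ∈ Set.Icc 0 t) :
    @inner ℝ _ _ f (χe t s) = ∫ r in s..t, (f : ℝ → ℝ) r := by
  rw [MeasureTheory.L2.inner_def]
  have h1 : ((χe t s : Lp ℝ 2 (μT t)) : ℝ → ℝ) =ᵐ[μT t]
      Set.indicator (Set.Ioc s t) (fun _ => (1:ℝ)) := MemLp.coeFn_toLp _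
  have h2 : ∫ a, @inner ℝ _ _ ((f : ℝ → ℝ) a) ((χe t s : Lp ℝ 2 (μT t) ) a) ∂(μT t)
      = ∫ a, Set.indicator (Set.Ioc s t) (fun r => (f : ℝ → ℝ) r) a ∂(μT t) := by
    refine integral_congr_ae ?_
    filter_upwards [h1] with a ha
    rw [RCLike.inner_apply, ha]
    by_cases hmem : a ∈ Set.Ioc s t <;>
      simp [Set.indicator_of_mem, Set.indicator_of_notMem, hmem]
  rw [h2, MeasureTheory.integral_indicator measurableSet_Ioc, μT_restrict t hs.1 le_rfl,
    intervalIntegral.integral_of_le hs.2]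

private lemma norm_sq_eq (f : Lp ℝ 2 (μT t)) :
    ‖f‖ ^ 2 = ∫ a, ((f : ℝ → ℝ) a) ^ 2 ∂(μT t) := by
  rw [← real_inner_self_eq_norm_sq, MeasureTheory.L2.inner_def]
  refine integral_congr_ae (Filter.Eventually.of_forall fun a => ?_)
  simp [RCLike.inner_apply, sq]

private lemma norm_χe_sub {s s' : ℝ} (h0 : 0 ≤ s) (hss' : s ≤ s') (h1 : s' ≤ t) :
    ‖χe t s - χe t s'‖ ≤ Real.sqrt (s' - s) := by
  have heq : (Set.indicator (Set.Ioc s t) (fun _ => (1:ℝ)))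
      - (Set.indicator (Set.Ioc s' t) (fun _ => (1:ℝ)))
      = Set.indicator (Set.Ioc s s') (fun _ => (1:ℝ)) := by
    rw [← Set.Ioc_union_Ioc_eq_Ioc hss' h1,
      Set.indicator_union_of_disjoint (Set.Ioc_disjoint_Ioc_of_le le_rfl)]
    funext a; simp
  have h2 : χe t s - χe t s' = MemLp.toLp _ ((memχ t s).sub (memχ t s')) :=
    (MemLp.toLp_sub _ _).symm
  rw [h2, Lp.norm_toLp]
  have h3 : eLpNorm ((Set.indicator (Set.Ioc s t) (fun _ => (1:ℝ)))
        - (Set.indicator (Set.Ioc s' t) (fun _ => (1:ℝ)))) 2 (μT t)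
      = ((μT t) (Set.Ioc s s')) ^ ((1:ℝ)/(2:ENNReal).toReal) := by
    rw [heq, eLpNorm_indicator_const measurableSet_Ioc (by norm_num) (by norm_num)]
    simp
  rw [h3]
  have h4 : (μT t) (Set.Ioc s s') ≤ ENNReal.ofReal (s' - s) := by
    rw [μT, Measure.restrict_apply measurableSet_Ioc]
    refine le_trans (measure_mono Set.inter_subset_left) ?_
    rw [Real.volume_Ioc]
  have h5 : ((μT t) (Set.Ioc s s')) ^ ((1:ℝ)/(2:ENNReal).toReal)
      ≤ (ENNReal.ofReal (s' - s)) ^ ((1:ℝ)/(2:ENNReal).toReal) :=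
    ENNReal.rpow_le_rpow h4 (by norm_num)
  have h6 : ((ENNReal.ofReal (s' - s)) ^ ((1:ℝ)/(2:ENNReal).toReal)).toReal
      = Real.sqrt (s' - s) := by
    rw [← ENNReal.toReal_rpow, ENNReal.toReal_ofReal (by linarith),
      Real.sqrt_eq_rpow]
    norm_num
  calc (((μT t) (Set.Ioc s s')) ^ ((1:ℝ)/(2:ENNReal).toReal)).toReal
      ≤ ((ENNReal.ofReal (s' - s)) ^ ((1:ℝ)/(2:ENNReal).toReal)).toReal :=
        ENNReal.toReal_mono (ENNReal.rpow_ne_top_of_nonneg (by norm_num) ENNReal.ofReal_ne_top) h5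
    _ = Real.sqrt (s' - s) := h6

end basics

section cont

variable {t : ℝ}

private lemma cont_χe (ht : 0 < t) : ContinuousOn (χe t) (Set.Icc 0 t) := by
  rw [Metric.continuousOn_iff]
  intro b hb ε hε
  refine ⟨ε^2, by positivity, fun a ha hab => ?_⟩
  have key : dist (χe t a) (χe t b) ≤ Real.sqrt (dist a b) := by
    rcases le_total a b with h | h
    · rw [dist_eq_norm, Real.dist_eq, abs_of_nonpos (by linarith)]
      simpa [neg_sub] using norm_χe_sub t ha.1 h hb.2
    · rw [dist_eq_norm, norm_sub_rev, Real.dist_eq, abs_of_nonneg (by linarith)]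
      exact norm_χe_sub t hb.1 h ha.2
  calc dist (χe t a) (χe t b) ≤ Real.sqrt (dist a b) := key
    _ < Real.sqrt (ε^2) := Real.sqrt_lt_sqrt dist_nonneg hab
    _ = ε := Real.sqrt_sq hε.le

private lemma intInt_V {V : ℝ → ℝ → ℝ}
    (hVcont : ContinuousOn (fun p : ℝ × ℝ => V p.1 p.2) (Set.Icc 0 t ×ˢ Set.univ))
    {u : ℝ → ℝ} (hu : ContinuousOn u (Set.Icc 0 t)) {b c : ℝ}
    (hb : b ∈ Set.Icc 0 t) (hc : c ∈ Set.Icc 0 t) :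
    IntervalIntegrable (fun s => V s (u s)) volume b c := by
  apply ContinuousOn.intervalIntegrable
  have hsub : Set.uIcc b c ⊆ Set.Icc 0 t := Set.uIcc_subset_Icc hb hc
  have : ContinuousOn (fun s => V s (u s)) (Set.Icc 0 t) :=
    hVcont.comp (f := fun s => (s, u s)) (s := Set.Icc 0 t) (continuousOn_id.prodMk hu) (fun s hs => ⟨hs, trivial⟩)
  exact this.mono hsub

private lemma cont_Y (ht : 0 < t) (x : ℝ) (ℓ : WeakDual ℝ (Lp ℝ 2 (μT t))) :
    ContinuousOn (fun s => x - ℓ (χe t s)) (Set.Icc 0 t) := by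
  have h1 : Continuous (WeakDual.toStrongDual ℓ) := (WeakDual.toStrongDual ℓ).continuous
  exact continuousOn_const.sub (h1.comp_continuousOn (cont_χe ht))

end cont

section phicont

/-- partition points -/
private def pt (t : ℝ) (n i : ℕ) : ℝ := i * (t / (n + 1))

private lemma pt_zero (t : ℝ) (n : ℕ) : pt t n 0 = 0 := by simp [pt]

private lemma pt_last (t : ℝ) (n : ℕ) : pt t n (n + 1) = t := by
  have : ((n:ℝ) + 1) ≠ 0 := by positivity
  rw [pt]; push_cast; field_simp

private lemma pt_step (t : ℝ) (n i : ℕ) : pt t n (i + 1) - pt t n i = t / (n + 1) := by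
  simp only [pt]
  push_cast
  ring

private lemma pt_mono {t : ℝ} (ht : 0 < t) (n : ℕ) {i j : ℕ} (hij : i ≤ j) :
    pt t n i ≤ pt t n j := by
  have : (0:ℝ) < t / (n+1) := by positivity
  simp only [pt]
  have : (i:ℝ) ≤ (j:ℝ) := Nat.cast_le.2 hij
  nlinarith

private lemma pt_mem {t : ℝ} (ht : 0 < t) (n : ℕ) {i : ℕ} (hi : i ≤ n + 1) :
    pt t n i ∈ Set.Icc 0 t := by
  constructor
  · simpa [pt_zero] using pt_mono ht n (Nat.zero_le i)
  · simpa [pt_last] using pt_mono ht n hi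

private lemma Φ_cont (t x : ℝ) (ht : 0 < t) (V : ℝ → ℝ → ℝ) (φ : ℝ → ℝ)
    (hVcont : ContinuousOn (fun p : ℝ × ℝ => V p.1 p.2) (Set.Icc 0 t ×ˢ Set.univ))
    (CL : ℝ) (hCL : 0 ≤ CL)
    (hVlip : ∀ s ∈ Set.Icc (0:ℝ) t, ∀ a b, |V s a - V s b| ≤ CL * |a - b|)
    (hφc : Continuous φ) (R : ℝ) :
    ContinuousOn (fun ℓ : WeakDual ℝ (Lp ℝ 2 (μT t)) =>
      (∫ s in (0:ℝ)..t, V s (x - ℓ (χe t s))) + φ (x - ℓ (χe t 0)))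
      (⇑WeakDual.toStrongDual ⁻¹' Metric.closedBall 0 R) := by
  set R' : ℝ := max R 0 with hR'
  have hR'0 : 0 ≤ R' := le_max_right _ _
  set K := ⇑WeakDual.toStrongDual ⁻¹' Metric.closedBall (0 : StrongDual ℝ (Lp ℝ 2 (μT t))) R with hK
  have hnormK : ∀ ℓ ∈ K, ‖WeakDual.toStrongDual ℓ‖ ≤ R' := by
    intro ℓ hℓ
    simp only [hK, Set.mem_preimage, Metric.mem_closedBall, dist_zero_right] at hℓ
    exact hℓ.trans (le_max_left _ _)
  -- the φ-part is continuous everywhere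
  have hφpart : Continuous (fun ℓ : WeakDual ℝ (Lp ℝ 2 (μT t)) => φ (x - ℓ (χe t 0))) :=
    hφc.comp (continuous_const.sub (WeakDual.eval_continuous (χe t 0)))
  refine ContinuousOn.add ?_ hφpart.continuousOn
  -- approximants
  set Φap : ℕ → WeakDual ℝ (Lp ℝ 2 (μT t)) → ℝ := fun n ℓ =>
    ∑ i ∈ Finset.range (n+1), ∫ s in pt t n i..pt t n (i+1), V s (x - ℓ (χe t (pt t n i)))
    with hΦap
  -- each approximant is continuous
  have hWcont : ∀ (b c z : ℝ), b ∈ Set.Icc 0 t → c ∈ Set.Icc 0 t →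
      Continuous (fun z : ℝ => ∫ s in b..c, V s z) := by
    intro b c _ hb hc
    have hlip : LipschitzWith (Real.toNNReal (CL * |c - b|))
        (fun z : ℝ => ∫ s in b..c, V s z) := by
      refine LipschitzWith.of_dist_le_mul fun z w => ?_
      have hint1 : IntervalIntegrable (fun s => V s z) volume b c :=
        intInt_V hVcont continuousOn_const hb hc
      have hint2 : IntervalIntegrable (fun s => V s w) volume b c :=
        intInt_V hVcont continuousOn_const hb hc
      rw [Real.dist_eq, Real.dist_eq, ← intervalIntegral.integral_sub hint1 hint2]
      have hbub : ∀ s ∈ Set.uIoc b c, ‖V s z - V s w‖ ≤ CL * |z - w| := by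
        intro s hs
        have hsmem : s ∈ Set.Icc 0 t := (Set.uIoc_subset_uIcc.trans (Set.uIcc_subset_Icc hb hc)) hs
        simpa [Real.norm_eq_abs] using hVlip s hsmem z w
      calc |∫ s in b..c, (V s z - V s w)| ≤ CL * |z - w| * |c - b| :=
            intervalIntegral.norm_integral_le_of_norm_le_const hbub
        _ = Real.toNNReal (CL * |c - b|) * |z - w| := by
            rw [Real.coe_toNNReal _ (by positivity)]; ring
    exact hlip.continuous
  have hΦapCont : ∀ n, Continuous (Φap n) := by
    intro n
    rw [hΦap]
    apply continuous_finset_sum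
    intro i hi
    have hi0 : i < n + 1 := Finset.mem_range.mp hi
    have hi' : i ≤ n + 1 := by omega
    have hi2 : i + 1 ≤ n + 1 := by omega
    exact (hWcont _ _ 0 (pt_mem ht n hi') (pt_mem ht n hi2)).comp
      (continuous_const.sub (WeakDual.eval_continuous (χe t (pt t n i))))
  -- the splitting of the full integral
  have hsplit : ∀ (n : ℕ) (ℓ : WeakDual ℝ (Lp ℝ 2 (μT t))),
      ∫ s in (0:ℝ)..t, V s (x - ℓ (χe t s)) =
      ∑ i ∈ Finset.range (n+1), ∫ s in pt t n i..pt t n (i+1), V s (x - ℓ (χe t s)) := by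
    intro n ℓ
    rw [intervalIntegral.sum_integral_adjacent_intervals (fun k hk =>
      intInt_V hVcont (cont_Y ht x ℓ) (pt_mem ht n (by omega)) (pt_mem ht n (by omega)))]
    rw [pt_zero, pt_last]
  -- the error bound
  have herr : ∀ (n : ℕ), ∀ ℓ ∈ K,
      |(∫ s in (0:ℝ)..t, V s (x - ℓ (χe t s))) - Φap n ℓ| ≤
        CL * R' * Real.sqrt (t/(n+1)) * t := by
    intro n ℓ hℓ
    rw [hsplit n ℓ, hΦap]
    have hstep : (0:ℝ) < t / (n+1) := by positivity
    rw [← Finset.sum_sub_distrib]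
    have hpiece : ∀ i ∈ Finset.range (n+1),
        |(∫ s in pt t n i..pt t n (i+1), V s (x - ℓ (χe t s))) -
          ∫ s in pt t n i..pt t n (i+1), V s (x - ℓ (χe t (pt t n i)))| ≤
          (CL * R' * Real.sqrt (t/(n+1))) * (t/(n+1)) := by
      intro i hi
      have hi0 : i < n + 1 := Finset.mem_range.mp hi
      have hi' : i ≤ n + 1 := by omega
      have hi2 : i + 1 ≤ n + 1 := by omega
      have hmi := pt_mem ht n hi'
      have hmi2 := pt_mem ht n hi2
      have hle : pt t n i ≤ pt t n (i+1) := pt_mono ht n (by omega)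
      have hint1 : IntervalIntegrable (fun s => V s (x - ℓ (χe t s))) volume
          (pt t n i) (pt t n (i+1)) := intInt_V hVcont (cont_Y ht x ℓ) hmi hmi2
      have hint2 : IntervalIntegrable (fun s => V s (x - ℓ (χe t (pt t n i)))) volume
          (pt t n i) (pt t n (i+1)) := intInt_V hVcont continuousOn_const hmi hmi2
      rw [← intervalIntegral.integral_sub hint1 hint2]
      have hbub : ∀ s ∈ Set.uIoc (pt t n i) (pt t n (i+1)),
          ‖V s (x - ℓ (χe t s)) - V s (x - ℓ (χe t (pt t n i)))‖ ≤
            CL * R' * Real.sqrt (t/(n+1)) := by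
        intro s hs
        rw [Set.uIoc_of_le hle] at hs
        have hsmem : s ∈ Set.Icc 0 t := ⟨le_trans hmi.1 hs.1.le, le_trans hs.2 hmi2.2⟩
        have h1 : |V s (x - ℓ (χe t s)) - V s (x - ℓ (χe t (pt t n i)))| ≤
            CL * |(x - ℓ (χe t s)) - (x - ℓ (χe t (pt t n i)))| := hVlip s hsmem _ _
        have h2 : (x - ℓ (χe t s)) - (x - ℓ (χe t (pt t n i))) = ℓ (χe t (pt t n i) - χe t s) := by
          rw [map_sub]; ring
        have h3 : |ℓ (χe t (pt t n i) - χe t s)| ≤ R' * Real.sqrt (t/(n+1)) := by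
          have hb1 : ‖χe t (pt t n i) - χe t s‖ ≤ Real.sqrt (s - pt t n i) :=
            norm_χe_sub t hmi.1 hs.1.le hsmem.2
          have hb2 : Real.sqrt (s - pt t n i) ≤ Real.sqrt (t/(n+1)) := by
            apply Real.sqrt_le_sqrt
            have := pt_step t n i
            linarith [hs.2]
          calc |ℓ (χe t (pt t n i) - χe t s)|
              ≤ ‖WeakDual.toStrongDual ℓ‖ * ‖χe t (pt t n i) - χe t s‖ :=
                (WeakDual.toStrongDual ℓ).le_opNorm _
            _ ≤ R' * Real.sqrt (t/(n+1)) := by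
                apply mul_le_mul (hnormK ℓ hℓ) (hb1.trans hb2) (norm_nonneg _) hR'0
        calc ‖V s (x - ℓ (χe t s)) - V s (x - ℓ (χe t (pt t n i)))‖
            ≤ CL * |ℓ (χe t (pt t n i) - χe t s)| := by
              rw [Real.norm_eq_abs]; rw [h2] at h1; exact h1
          _ ≤ CL * (R' * Real.sqrt (t/(n+1))) := by
              exact mul_le_mul_of_nonneg_left h3 hCL
          _ = CL * R' * Real.sqrt (t/(n+1)) := by ring
      calc ‖∫ s in pt t n i..pt t n (i+1),
            (V s (x - ℓ (χe t s)) - V s (x - ℓ (χe t (pt t n i))))‖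
          ≤ CL * R' * Real.sqrt (t/(n+1)) * |pt t n (i+1) - pt t n i| :=
            intervalIntegral.norm_integral_le_of_norm_le_const hbub
        _ = (CL * R' * Real.sqrt (t/(n+1))) * (t/(n+1)) := by
            rw [pt_step t n i, abs_of_pos hstep]
    calc |∑ i ∈ Finset.range (n+1),
          ((∫ s in pt t n i..pt t n (i+1), V s (x - ℓ (χe t s))) -
            ∫ s in pt t n i..pt t n (i+1), V s (x - ℓ (χe t (pt t n i))))|
        ≤ ∑ i ∈ Finset.range (n+1), (CL * R' * Real.sqrt (t/(n+1))) * (t/(n+1)) :=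
          Finset.abs_sum_le_sum_abs _ _ |>.trans (Finset.sum_le_sum hpiece)
      _ = CL * R' * Real.sqrt (t/(n+1)) * t := by
          rw [Finset.sum_const, Finset.card_range]
          have : ((n:ℝ)+1) ≠ 0 := by positivity
          rw [nsmul_eq_mul]; push_cast; rw [mul_comm, mul_assoc, div_mul_cancel₀ _ this]
  -- the error tends to zero
  have hb0 : Tendsto (fun n : ℕ => CL * R' * Real.sqrt (t/(n+1)) * t) atTop (nhds 0) := by
    have h1 : Tendsto (fun n : ℕ => t/(n+1)) atTop (nhds 0) :=
      Filter.Tendsto.div_atTop tendsto_const_nhds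
        (Filter.tendsto_atTop_add_const_right atTop 1 tendsto_natCast_atTop_atTop)
    have h2 : Tendsto (fun n : ℕ => Real.sqrt (t/(n+1))) atTop (nhds 0) := by
      have := (Real.continuous_sqrt.tendsto 0).comp h1
      simpa [Function.comp_def] using this
    have h3 := h2.const_mul (CL * R')
    have h4 := h3.mul_const t
    simpa using h4
  -- uniform convergence, hence continuity
  have hunif : TendstoUniformlyOn Φap
      (fun ℓ => ∫ s in (0:ℝ)..t, V s (x - ℓ (χe t s))) atTop K := by
    rw [Metric.tendstoUniformlyOn_iff]
    intro ε hε
    filter_upwards [hb0.eventually (gt_mem_nhds hε)] with n hn ℓ hℓ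
    rw [Real.dist_eq]
    exact lt_of_le_of_lt (herr n ℓ hℓ) hn
  exact hunif.continuousOn (Filter.Eventually.of_forall fun n => (hΦapCont n).continuousOn).frequently

end phicont

section main

private theorem tonelli (t x : ℝ) (ht : 0 < t) (V : ℝ → ℝ → ℝ) (φ : ℝ → ℝ)
    (hVcont : ContinuousOn (fun p : ℝ × ℝ => V p.1 p.2) (Set.Icc 0 t ×ˢ Set.univ))
    (CV : ℝ) (hCV : 0 ≤ CV) (hVbdd : ∀ s ∈ Set.Icc (0:ℝ) t, ∀ y, |V s y| ≤ CV)
    (CL : ℝ) (hCL : 0 ≤ CL)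
    (hVlip : ∀ s ∈ Set.Icc (0:ℝ) t, ∀ a b, |V s a - V s b| ≤ CL * |a - b|)
    (hφc : Continuous φ) (Cφ : ℝ) (hφbdd : ∀ y, |φ y| ≤ Cφ) :
    ∃ ytilde gtilde,
      (MemLp gtilde 2 (μT t) ∧
        (∀ s ∈ Set.Icc (0:ℝ) t, ytilde s = ytilde 0 + ∫ r in (0:ℝ)..s, gtilde r) ∧
        ytilde t = x) ∧
      Act t V φ ytilde gtilde = sInf {a : ℝ | ∃ y g,
        (MemLp g 2 (μT t) ∧
          (∀ s ∈ Set.Icc (0:ℝ) t, y s = y 0 + ∫ r in (0:ℝ)..s, g r) ∧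
          y t = x) ∧ a = Act t V φ y g} := by
  classical
  have h0t : (0:ℝ) ∈ Set.Icc 0 t := Set.left_mem_Icc.2 ht.le
  have htt : t ∈ Set.Icc 0 t := Set.right_mem_Icc.2 ht.le
  -- interval integrability of L² functions
  have hgIntAll : ∀ (g : ℝ → ℝ), MemLp g 2 (μT t) → ∀ a b, a ∈ Set.Icc 0 t →
      b ∈ Set.Icc 0 t → IntervalIntegrable g volume a b := by
    intro g hg a b ha hb
    have h1 : MemLp g 1 (μT t) := hg.mono_exponent (by norm_num)
    have h2 : Integrable g (μT t) := memLp_one_iff_integrable.mp h1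
    have h3 : IntegrableOn g (Set.Icc 0 t) volume := h2
    rw [intervalIntegrable_iff]
    exact h3.mono_set ((Set.uIoc_subset_uIcc).trans (Set.uIcc_subset_Icc ha hb))
  -- the reduced functional
  set Φ : WeakDual ℝ (Lp ℝ 2 (μT t)) → ℝ := fun ℓ =>
    (∫ s in (0:ℝ)..t, V s (x - ℓ (χe t s))) + φ (x - ℓ (χe t 0)) with hΦ
  set M : ℝ := CV * t + Cφ with hM
  have hΦbdd : ∀ ℓ, |Φ ℓ| ≤ M := by
    intro ℓ
    have h1 : |∫ s in (0:ℝ)..t, V s (x - ℓ (χe t s))| ≤ CV * t := by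
      have h2 : ∀ s ∈ Set.uIoc (0:ℝ) t, ‖V s (x - ℓ (χe t s))‖ ≤ CV := by
        intro s hs
        rw [Set.uIoc_of_le ht.le] at hs
        simpa [Real.norm_eq_abs] using hVbdd s ⟨hs.1.le, hs.2⟩ _
      have := intervalIntegral.norm_integral_le_of_norm_le_const h2
      rw [Real.norm_eq_abs] at this
      simpa [abs_of_pos ht] using this
    calc |Φ ℓ| ≤ |∫ s in (0:ℝ)..t, V s (x - ℓ (χe t s))| + |φ (x - ℓ (χe t 0))| :=
          abs_add_le _ _
      _ ≤ CV * t + Cφ := add_le_add h1 (hφbdd _)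
  obtain ⟨ℓm, hℓm⟩ := hilbert_exists_min Φ M hΦbdd
    (fun R => Φ_cont t x ht V φ hVcont CL hCL hVlip hφc R)
  -- identification of the action with the reduced functional
  have hident : ∀ (y g : ℝ → ℝ) (hg : MemLp g 2 (μT t)),
      (∀ s ∈ Set.Icc (0:ℝ) t, y s = y 0 + ∫ r in (0:ℝ)..s, g r) → y t = x →
      Act t V φ y g = (1/2) * ‖MemLp.toLp g hg‖^2
        + Φ (StrongDual.toWeakDual
            (InnerProductSpace.toDual ℝ (Lp ℝ 2 (μT t)) (MemLp.toLp g hg))) := by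
    intro y g hg hy hyt
    set G : Lp ℝ 2 (μT t) := MemLp.toLp g hg with hG
    set ℓ : WeakDual ℝ (Lp ℝ 2 (μT t)) :=
      StrongDual.toWeakDual (InnerProductSpace.toDual ℝ (Lp ℝ 2 (μT t)) G) with hℓdef
    have hℓapp : ∀ v, ℓ v = @inner ℝ _ _ G v := fun v => by
      rw [hℓdef]
      rfl
    have hyrep : ∀ s ∈ Set.Icc (0:ℝ) t, y s = x - ℓ (χe t s) := by
      intro s hs
      have hadd : (∫ r in (0:ℝ)..s, g r) + (∫ r in s..t, g r) = ∫ r in (0:ℝ)..t, g r :=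
        intervalIntegral.integral_add_adjacent_intervals
          (hgIntAll g hg 0 s h0t hs) (hgIntAll g hg s t hs htt)
      have hYt := hy t htt
      have hYs := hy s hs
      have hinner' : ℓ (χe t s) = ∫ r in s..t, g r := by
        rw [hℓapp, inner_χe t G hs]
        exact intervalIntegral_congr_μT t (hg.coeFn_toLp) hs.1 hs.2 le_rfl
      rw [hinner', hYs]
      rw [hYt] at hyt
      linarith
    have hterm1 : ∫ s in (0:ℝ)..t, (g s)^2 = ‖G‖^2 := by
      rw [norm_sq_eq]
      have h1 : ∫ a, ((G : ℝ → ℝ) a)^2 ∂(μT t) = ∫ a, (g a)^2 ∂(μT t) := by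
        refine integral_congr_ae ?_
        filter_upwards [hg.coeFn_toLp] with a ha using by rw [ha]
      rw [h1]
      rw [show (μT t) = volume.restrict (Set.Icc 0 t) from rfl,
        ← Measure.restrict_congr_set Ioc_ae_eq_Icc,
        intervalIntegral.integral_of_le ht.le]
    have hterm2 : ∫ s in (0:ℝ)..t, V s (y s) = ∫ s in (0:ℝ)..t, V s (x - ℓ (χe t s)) :=
      intervalIntegral.integral_congr (fun s hs =>
        by rw [hyrep s (by rwa [Set.uIcc_of_le ht.le] at hs)])
    have hterm3 : φ (y 0) = φ (x - ℓ (χe t 0)) := by rw [hyrep 0 h0t]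
    rw [Act, hterm1, hterm2, hterm3]
    simp only [hΦ]
    ring
  -- construction of an admissible pair from any functional
  have hconstr : ∀ ℓ : WeakDual ℝ (Lp ℝ 2 (μT t)), ∃ y g,
      (MemLp g 2 (μT t) ∧
        (∀ s ∈ Set.Icc (0:ℝ) t, y s = y 0 + ∫ r in (0:ℝ)..s, g r) ∧ y t = x) ∧
      Act t V φ y g = (1/2) * ‖WeakDual.toStrongDual ℓ‖^2 + Φ ℓ := by
    intro ℓ
    set G : Lp ℝ 2 (μT t) :=
      (InnerProductSpace.toDual ℝ (Lp ℝ 2 (μT t))).symm (WeakDual.toStrongDual ℓ) with hGdef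
    set g : ℝ → ℝ := ((G : Lp ℝ 2 (μT t)) : ℝ → ℝ) with hg_def
    have hg : MemLp g 2 (μT t) := Lp.memLp G
    set y : ℝ → ℝ := fun s => x - ∫ r in s..t, g r with hy_def
    have hyt : y t = x := by simp [hy_def]
    have hy2 : ∀ s ∈ Set.Icc (0:ℝ) t, y s = y 0 + ∫ r in (0:ℝ)..s, g r := by
      intro s hs
      have hadd : (∫ r in (0:ℝ)..s, g r) + (∫ r in s..t, g r) = ∫ r in (0:ℝ)..t, g r :=
        intervalIntegral.integral_add_adjacent_intervals
          (hgIntAll g hg 0 s h0t hs) (hgIntAll g hg s t hs htt)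
      simp only [hy_def]
      linarith
    refine ⟨y, g, ⟨hg, hy2, hyt⟩, ?_⟩
    rw [hident y g hg hy2 hyt]
    have hGL : MemLp.toLp g hg = G := Lp.toLp_coeFn G hg
    rw [hGL]
    have h1 : InnerProductSpace.toDual ℝ (Lp ℝ 2 (μT t)) G = WeakDual.toStrongDual ℓ := by
      rw [hGdef]
      exact (InnerProductSpace.toDual ℝ (Lp ℝ 2 (μT t))).apply_symm_apply _
    have h2 : ‖G‖ = ‖WeakDual.toStrongDual ℓ‖ := by
      rw [← h1]
      exact ((InnerProductSpace.toDual ℝ (Lp ℝ 2 (μT t))).norm_map G).symm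
    rw [h1, h2]
    have h3 : StrongDual.toWeakDual (WeakDual.toStrongDual ℓ) = ℓ :=
      LinearEquiv.apply_symm_apply _ _
    rw [h3]
  -- conclusion
  obtain ⟨ytilde, gtilde, hP, hE⟩ := hconstr ℓm
  set S := {a : ℝ | ∃ y g,
    (MemLp g 2 (μT t) ∧
      (∀ s ∈ Set.Icc (0:ℝ) t, y s = y 0 + ∫ r in (0:ℝ)..s, g r) ∧
      y t = x) ∧ a = Act t V φ y g} with hS
  have hlb : ∀ a ∈ S, (1/2) * ‖WeakDual.toStrongDual ℓm‖^2 + Φ ℓm ≤ a := by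
    rintro a ⟨y, g, ⟨hg, hy2, hyt⟩, rfl⟩
    rw [hident y g hg hy2 hyt]
    have key := hℓm (StrongDual.toWeakDual
      (InnerProductSpace.toDual ℝ (Lp ℝ 2 (μT t)) (MemLp.toLp g hg)))
    have hnorm : ‖WeakDual.toStrongDual (StrongDual.toWeakDual
        (InnerProductSpace.toDual ℝ (Lp ℝ 2 (μT t)) (MemLp.toLp g hg)))‖
        = ‖MemLp.toLp g hg‖ := by
      rw [show WeakDual.toStrongDual (StrongDual.toWeakDual
        (InnerProductSpace.toDual ℝ (Lp ℝ 2 (μT t)) (MemLp.toLp g hg)))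
        = InnerProductSpace.toDual ℝ (Lp ℝ 2 (μT t)) (MemLp.toLp g hg) from
          LinearEquiv.symm_apply_apply _ _]
      exact (InnerProductSpace.toDual ℝ (Lp ℝ 2 (μT t))).norm_map _
    rw [hnorm] at key
    exact key
  have hmem : Act t V φ ytilde gtilde ∈ S := ⟨ytilde, gtilde, hP, rfl⟩
  refine ⟨ytilde, gtilde, hP, ?_⟩
  have h1 : sInf S ≤ Act t V φ ytilde gtilde :=
    csInf_le ⟨(1/2) * ‖WeakDual.toStrongDual ℓm‖^2 + Φ ℓm, hlb⟩ hmem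
  have h2 : Act t V φ ytilde gtilde ≤ sInf S := by
    rw [hE]
    exact le_csInf ⟨_, hmem⟩ hlb
  exact le_antisymm h2 h1

end main

end

/-- **Existence of the minimiser of the action functional** (Tonelli).
Admissible trajectories are `W^{1,2}` paths `y(s) = y(0) + ∫₀ˢ g` with `g ∈ L²([0,t])` and
`y(t) = x`; the action is `A(y) = ½∫₀ᵗ g² + ∫₀ᵗ V(s,y(s)) ds + φ(y(0))`.  There exists an
admissible trajectory attaining the infimum of the action over all admissible trajectories. -/
theorem exists_action_minimiser (t x : ℝ) (ht : 0 < t)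
    (V : ℝ → ℝ → ℝ) (φ : ℝ → ℝ)
    (hVcont : ContinuousOn (fun p : ℝ × ℝ => V p.1 p.2) (Set.Icc 0 t ×ˢ Set.univ))
    (hVbdd : ∃ C, ∀ s ∈ Set.Icc (0:ℝ) t, ∀ y, |V s y| ≤ C)
    (Vx : ℝ → ℝ → ℝ)
    (hVx : ∀ s ∈ Set.Icc (0:ℝ) t, ∀ y, HasDerivAt (V s) (Vx s y) y)
    (hVxcont : ContinuousOn (fun p : ℝ × ℝ => Vx p.1 p.2) (Set.Icc 0 t ×ˢ Set.univ))
    (hVxbdd : ∃ C, ∀ s ∈ Set.Icc (0:ℝ) t, ∀ y, |Vx s y| ≤ C)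
    (hφ : ContDiff ℝ 1 φ) (hφbdd : ∃ C, ∀ y, |φ y| ≤ C)
    (hφ'bdd : ∃ C, ∀ y, |deriv φ y| ≤ C)
    (Adm : (ℝ → ℝ) → (ℝ → ℝ) → Prop)
    (hAdm : ∀ y g, Adm y g ↔
      MemLp g 2 (volume.restrict (Set.Icc (0:ℝ) t)) ∧
      (∀ s ∈ Set.Icc (0:ℝ) t, y s = y 0 + ∫ r in (0:ℝ)..s, g r) ∧
      y t = x)
    (A : (ℝ → ℝ) → (ℝ → ℝ) → ℝ)
    (hA : ∀ y g, A y g = (1 / 2) * (∫ s in (0:ℝ)..t, (g s) ^ 2)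
        + (∫ s in (0:ℝ)..t, V s (y s)) + φ (y 0)) :
    ∃ ytilde gtilde, Adm ytilde gtilde ∧
      A ytilde gtilde = sInf {a : ℝ | ∃ y g, Adm y g ∧ a = A y g} := by
  obtain ⟨CV0, hCV0⟩ := hVbdd
  obtain ⟨Cφ0, hCφ0⟩ := hφbdd
  obtain ⟨C1, hC1⟩ := hVxbdd
  have hφc : Continuous φ := hφ.continuous
  have hVlip : ∀ s ∈ Set.Icc (0:ℝ) t, ∀ a b, |V s a - V s b| ≤ (max C1 0) * |a - b| := by
    intro s hs a b
    have := Convex.norm_image_sub_le_of_norm_hasDerivWithin_le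
      (f := V s) (f' := Vx s) (s := Set.univ) (C := max C1 0)
      (fun z _ => (hVx s hs z).hasDerivWithinAt)
      (fun z _ => by rw [Real.norm_eq_abs]; exact (hC1 s hs z).trans (le_max_left _ _))
      convex_univ (Set.mem_univ b) (Set.mem_univ a)
    simpa [Real.norm_eq_abs] using this
  have hVbdd' : ∀ s ∈ Set.Icc (0:ℝ) t, ∀ y, |V s y| ≤ max CV0 0 :=
    fun s hs y => (hCV0 s hs y).trans (le_max_left _ _)
  obtain ⟨yt, gt, hP, hE⟩ := tonelli t x ht V φ hVcont (max CV0 0) (le_max_right _ _) hVbdd'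
    (max C1 0) (le_max_right _ _) hVlip hφc Cφ0 hCφ0
  have hseteq : {a : ℝ | ∃ y g, Adm y g ∧ a = A y g} = {a : ℝ | ∃ y g,
      (MemLp g 2 (μT t) ∧
        (∀ s ∈ Set.Icc (0:ℝ) t, y s = y 0 + ∫ r in (0:ℝ)..s, g r) ∧
        y t = x) ∧ a = Act t V φ y g} := by
    ext a
    constructor
    · rintro ⟨y, g, hadm, rfl⟩
      exact ⟨y, g, (hAdm y g).1 hadm, hA y g⟩
    · rintro ⟨y, g, hPyg, rfl⟩
      exact ⟨y, g, (hAdm y g).2 hPyg, (hA y g).symm⟩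
  refine ⟨yt, gt, (hAdm yt gt).2 hP, ?_⟩
  rw [hA, hseteq]
  exact hE
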